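/- Let Γ be a group acting on holomorphic functions on the upper half-plane via weight-k slash operators: (f|_k γ)(z) = f(γz) j(γ,z)^{−k}, extended linearly to the group ring. Suppose F, G: H → C satisfy F|_{k₁}(γ_1−1)···(γ_s−1) = 0 and G|_{k₂}(δ_1−1)···(δ_t−1) = 0 for all γ_i, δ_j ∈ Γ. Then for all γ_1,...,γ_{s+t−2} ∈ Γ: (F·G)|_{k₁+k₂}(γ_1−1)···(γ_{s+t−2}−1) = Σ over shuffles (φ,ψ) of {1,...,s+t−2} into blocks of sizes s−1 and t−1 of [F|_{k₁}(γ_{φ(1)}−1)···(γ_{φ(s−1)}−1)] · [G|_{k₂}(γ_{ψ(s)}−1)···(γ_{ψ(s+t−2)}−1)]. -/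

import Mathlib

open UpperHalfPlane

/-- `j(γ,z) = cz + d` for `γ = [[a,b],[c,d]] ∈ SL(2,ℝ)`. -/
def jFactor (γ : Matrix.SpecialLinearGroup (Fin 2) ℝ) (z : ℍ) : ℂ :=
  ((γ 1 0 : ℝ) : ℂ) * (z : ℂ) + ((γ 1 1 : ℝ) : ℂ)

/-- The weight-`k` slash operator `(f ∣[k] γ)(z) = f(γz) j(γ,z)^{−k}`. -/
noncomputable def slashSL (k : ℤ) (γ : Matrix.SpecialLinearGroup (Fin 2) ℝ)
    (f : ℍ → ℂ) : ℍ → ℂ :=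
  fun z => f (γ • z) * jFactor γ z ^ (-k)

/-- Iterated application of the group-ring operators `(γ₁−1)⋯(γₙ−1)` to `F` via
the weight-`k` slash action: `F ↦ F∣[k]γ − F`, applied successively. -/
noncomputable def iterSlashDiff (k : ℤ) (F : ℍ → ℂ) :
    List (Matrix.SpecialLinearGroup (Fin 2) ℝ) → ℍ → ℂ
  | [] => F
  | γ :: l => iterSlashDiff k (slashSL k γ F - F) l

set_option linter.unreachableTactic false
set_option linter.unusedTactic false
set_option maxHeartbeats 1000000
local notation "SL2" => Matrix.SpecialLinearGroup (Fin 2) ℝ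

lemma jFactor_ne_zero (γ : SL2) (z : ℍ) : jFactor γ z ≠ 0 := by
  intro h
  unfold jFactor at h
  by_cases hc : (γ 1 0 : ℝ) = 0
  · rw [hc] at h
    simp at h
    have hd := γ.2
    rw [Matrix.det_fin_two] at hd
    rw [hc, h] at hd
    simp at hd
  · have him : ((γ 1 0 : ℝ) * (z : ℂ) + (γ 1 1 : ℝ)).im = (γ 1 0 : ℝ) * z.im := by
      simp [Complex.add_im, Complex.mul_im]
    rw [h] at him
    simp at him
    rcases him with h1 | h2
    · exact hc h1
    · exact z.2.ne' (by simpa using h2)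

lemma slashSL_add (k : ℤ) (γ : SL2) (f g : ℍ → ℂ) :
    slashSL k γ (f + g) = slashSL k γ f + slashSL k γ g := by
  funext z; simp [slashSL, add_mul]

lemma slashSL_zero (k : ℤ) (γ : SL2) : slashSL k γ (0 : ℍ → ℂ) = 0 := by
  funext z; simp [slashSL]

lemma slashSL_mul (k₁ k₂ : ℤ) (γ : SL2) (f g : ℍ → ℂ) :
    slashSL (k₁ + k₂) γ (f * g) = slashSL k₁ γ f * slashSL k₂ γ g := by
  funext z
  simp only [slashSL, Pi.mul_apply]
  rw [neg_add, zpow_add₀ (jFactor_ne_zero γ z)]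
  ring

lemma leibniz (k₁ k₂ : ℤ) (γ : SL2) (F G : ℍ → ℂ) :
    slashSL (k₁ + k₂) γ (F * G) - F * G =
      (slashSL k₁ γ F - F) * (slashSL k₂ γ G - G) +
        ((slashSL k₁ γ F - F) * G + F * (slashSL k₂ γ G - G)) := by
  rw [slashSL_mul]; ring

lemma iter_add (k : ℤ) (f g : ℍ → ℂ) (l : List SL2) :
    iterSlashDiff k (f + g) l = iterSlashDiff k f l + iterSlashDiff k g l := by
  induction l generalizing f g with
  | nil => rfl
  | cons γ l ih =>
    show iterSlashDiff k (slashSL k γ (f+g) - (f+g)) l = _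
    rw [show slashSL k γ (f+g) - (f+g) = (slashSL k γ f - f) + (slashSL k γ g - g) by
      rw [slashSL_add]; ring]
    exact ih _ _

lemma iter_zero (k : ℤ) (l : List SL2) : iterSlashDiff k (0 : ℍ → ℂ) l = 0 := by
  induction l with
  | nil => rfl
  | cons γ l ih =>
    show iterSlashDiff k (slashSL k γ 0 - 0) l = 0
    rw [slashSL_zero, sub_zero]; exact ih

lemma iter_append (k : ℤ) (f : ℍ → ℂ) (l₁ l₂ : List SL2) :
    iterSlashDiff k f (l₁ ++ l₂) = iterSlashDiff k (iterSlashDiff k f l₁) l₂ := by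
  induction l₁ generalizing f with
  | nil => rfl
  | cons γ l ih => exact ih _

lemma expansion (k₁ k₂ : ℤ) : ∀ (n : ℕ) (γ : Fin n → SL2) (F G : ℍ → ℂ),
    iterSlashDiff (k₁ + k₂) (F * G) (List.ofFn γ) =
      ∑ v : Fin n → Fin 3,
        iterSlashDiff k₁ F (((List.finRange n).filter (fun i => decide (v i ≠ 1))).map γ) *
          iterSlashDiff k₂ G (((List.finRange n).filter (fun i => decide (v i ≠ 0))).map γ) := by
  intro n
  induction n with
  | zero =>
    intro γ F G
    simp [List.ofFn_zero, iterSlashDiff]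
  | succ n ih =>
    intro γ F G
    rw [List.ofFn_succ]
    show iterSlashDiff (k₁+k₂) (slashSL (k₁+k₂) (γ 0) (F*G) - F*G) (List.ofFn fun i => γ i.succ) = _
    rw [leibniz k₁ k₂ (γ 0) F G, iter_add, iter_add]
    rw [show (slashSL k₁ (γ 0) F - F) * (slashSL k₂ (γ 0) G - G) =
        (slashSL k₁ (γ 0) F - F) * (slashSL k₂ (γ 0) G - G) from rfl]
    rw [ih (fun i => γ i.succ) (slashSL k₁ (γ 0) F - F) (slashSL k₂ (γ 0) G - G),
        ih (fun i => γ i.succ) (slashSL k₁ (γ 0) F - F) G,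
        ih (fun i => γ i.succ) F (slashSL k₂ (γ 0) G - G)]
    rw [← Equiv.sum_comp (Fin.consEquiv (fun _ : Fin (n+1) => Fin 3))]
    rw [Fintype.sum_prod_type]
    rw [Fin.sum_univ_three]
    have hfr : List.finRange (n+1) = 0 :: List.map Fin.succ (List.finRange n) :=
      List.finRange_succ
    have key : ∀ (a : Fin 3) (w : Fin n → Fin 3) (b : Fin 3),
        ((List.finRange (n+1)).filter
            (fun i => decide ((Fin.consEquiv (fun _ : Fin (n+1) => Fin 3)) (a, w) i ≠ b))).map γ =
          (if a ≠ b then γ 0 :: (((List.finRange n).filter (fun i => decide (w i ≠ b))).map (fun i => γ i.succ))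
            else ((List.finRange n).filter (fun i => decide (w i ≠ b))).map (fun i => γ i.succ)) := by
      intro a w b
      rw [hfr, List.filter_cons, List.filter_map]
      by_cases hab : a = b
      · subst hab
        simp [Fin.cons_succ, Function.comp_def, List.map_map]
      · simp [Fin.cons_succ, Function.comp_def, List.map_map, hab]
    simp only [key]
    simp only [show ¬((0:Fin 3) ≠ 0) by decide, show ((0:Fin 3) ≠ 1) by decide,
      show ((1:Fin 3) ≠ 0) by decide, show ¬((1:Fin 3) ≠ 1) by decide,
      show ((2:Fin 3) ≠ 0) by decide, show ((2:Fin 3) ≠ 1) by decide,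
      if_true, if_false]
    simp only [ne_eq, Fin.reduceEq, not_false_eq_true, if_true]
    simp only [iterSlashDiff]
    ring

-- counting lemmas
lemma length_le_filter_add_filter {α : Type*} (p q : α → Bool) :
    ∀ l : List α, (∀ x ∈ l, p x ∨ q x) →
      l.length ≤ (l.filter p).length + (l.filter q).length := by
  intro l
  induction l with
  | nil => simp
  | cons a l ih =>
    intro h
    have ha := h a (by simp)
    have hl := ih (fun x hx => h x (by simp [hx]))
    rw [List.filter_cons, List.filter_cons]
    rcases ha with hp | hq
    · rw [hp]
      cases hqa : q a <;> simp_all <;> omega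
    · rw [hq]
      cases hpa : p a <;> simp_all <;> omega

lemma no_overlap_of_eq {α : Type*} (p q : α → Bool) :
    ∀ l : List α, (∀ x ∈ l, p x ∨ q x) →
      (l.filter p).length + (l.filter q).length = l.length →
      ∀ x ∈ l, ¬(p x ∧ q x) := by
  intro l
  induction l with
  | nil => simp
  | cons a l ih =>
    intro h heq
    have hrest := length_le_filter_add_filter p q l (fun x hx => h x (by simp [hx]))
    rw [List.filter_cons, List.filter_cons] at heq
    intro x hx
    rcases List.mem_cons.mp hx with rfl | hx'
    · rintro ⟨hp, hq⟩
      rw [hp, hq] at heq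
      simp at heq
      omega
    · refine ih (fun y hy => h y (by simp [hy])) ?_ x hx'
      have ha := h a (by simp)
      rcases ha with hp | hq
      · rw [hp] at heq
        cases hqa : q a
        · rw [hqa] at heq; simp at heq; omega
        · rw [hqa] at heq; simp at heq; omega
      · rw [hq] at heq
        cases hpa : p a
        · rw [hpa] at heq; simp at heq; omega
        · rw [hpa] at heq; simp at heq; omega

-- strictly sorted filter of finRange
lemma filter_finRange_eq_ofFn {n m : ℕ} (q : Fin m → Fin n) (hq : StrictMono q)
    (p : Fin n → Bool) (hp : ∀ i, p i = true ↔ i ∈ Set.range q) :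
    (List.finRange n).filter p = List.ofFn q := by
  haveI : IsAntisymm (Fin n) (· < ·) := ⟨fun a b h h' => absurd h' (lt_asymm h)⟩
  refine (fun hp h1 h2 => List.Perm.eq_of_pairwise (le := (· < ·)) (fun a b _ _ h h' => absurd h' (lt_asymm h)) h1 h2 hp) ?_ ?_ ?_
  · rw [List.perm_ext_iff_of_nodup ((List.nodup_finRange n).filter p)
      ((List.nodup_ofFn).mpr hq.injective)]
    intro a
    simp only [List.mem_filter, List.mem_finRange, true_and, List.mem_ofFn]
    rw [hp a]
    exact Iff.rfl
  · exact List.Pairwise.filter p (List.pairwise_lt_finRange n)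
  · exact (List.pairwise_ofFn).mpr (fun i j hij => hq hij)

-- strict monos with same range are equal
lemma strictMono_range_eq {n m : ℕ} {f g : Fin m → Fin n} (hf : StrictMono f)
    (hg : StrictMono g) (h : Set.range f = Set.range g) : f = g := by
  have hcard : (Finset.image f Finset.univ).card = m := by
    rw [Finset.card_image_of_injective _ hf.injective, Finset.card_univ, Fintype.card_fin]
  have hfe : f = (Finset.image f Finset.univ).orderEmbOfFin hcard :=
    Finset.orderEmbOfFin_unique hcard (fun x => Finset.mem_image_of_mem f (Finset.mem_univ x)) hf
  have hge : g = (Finset.image f Finset.univ).orderEmbOfFin hcard := by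
    apply Finset.orderEmbOfFin_unique hcard ?_ hg
    intro x
    have : g x ∈ Set.range f := h ▸ Set.mem_range_self x
    obtain ⟨y, hy⟩ := this
    exact hy ▸ Finset.mem_image_of_mem f (Finset.mem_univ y)
  rw [hfe, hge]

-- card of finset filter vs list filter length
lemma filter_length_eq_card {n : ℕ} (p : Fin n → Bool) :
    ((List.finRange n).filter p).length = (Finset.univ.filter (fun i => p i = true)).card := by
  classical
  rw [← List.toFinset_card_of_nodup ((List.nodup_finRange n).filter p)]
  congr 1
  ext a
  simp [List.mem_filter]

lemma iter_vanish (Γ : Subgroup SL2) (k : ℤ) (F : ℍ → ℂ) (m : ℕ)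
    (h : ∀ γ : Fin m → Γ, iterSlashDiff k F (List.ofFn fun i => (γ i : SL2)) = 0) :
    ∀ l : List SL2, (∀ x ∈ l, x ∈ Γ) → m ≤ l.length → iterSlashDiff k F l = 0 := by
  intro l hl hlen
  rw [← List.take_append_drop m l, iter_append]
  have hlen' : (l.take m).length = m := by rw [List.length_take]; omega
  set l' := l.take m with hl'
  have hmem : ∀ x ∈ l', x ∈ Γ := fun x hx => hl x (List.take_subset m l hx)
  set γ₀ : Fin m → Γ := fun i =>
    ⟨l'[(i : ℕ)]'(by omega), hmem _ (List.getElem_mem _)⟩ with hγ₀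
  have hofn : (List.ofFn fun i => (γ₀ i : SL2)) = l' := by
    apply List.ext_getElem
    · simp [hlen']
    · intro i h1 h2
      simp [hγ₀, List.getElem_ofFn]
  have h0 : iterSlashDiff k F l' = 0 := by rw [← hofn]; exact h γ₀
  rw [h0]
  exact iter_zero k _

/-- The shuffle formula: if `F∣[k₁](γ₁−1)⋯(γ_s−1) = 0` and `G∣[k₂](δ₁−1)⋯(δ_t−1) = 0`
for all group elements, then `(F⬝G)∣[k₁+k₂](γ₁−1)⋯(γ_{s+t−2}−1)` is the sum over shuffles
of `{1,...,s+t−2}` into blocks of sizes `s−1` and `t−1` of the corresponding products. -/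
theorem slash_shuffle_formula (Γ : Subgroup (Matrix.SpecialLinearGroup (Fin 2) ℝ))
    (k₁ k₂ : ℤ) (F G : ℍ → ℂ) (s t : ℕ) (hs : 1 ≤ s) (ht : 1 ≤ t)
    (hF : ∀ γ : Fin s → Γ, iterSlashDiff k₁ F (List.ofFn fun i => (γ i : _)) = 0)
    (hG : ∀ δ : Fin t → Γ, iterSlashDiff k₂ G (List.ofFn fun i => (δ i : _)) = 0) :
    ∀ γ : Fin (s + t - 2) → Γ,
      iterSlashDiff (k₁ + k₂) (F * G) (List.ofFn fun i => (γ i : _)) =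
        ∑ᶠ p : {q : (Fin (s - 1) → Fin (s + t - 2)) × (Fin (t - 1) → Fin (s + t - 2)) //
            StrictMono q.1 ∧ StrictMono q.2 ∧ Disjoint (Set.range q.1) (Set.range q.2) ∧
              Set.range q.1 ∪ Set.range q.2 = Set.univ},
          iterSlashDiff k₁ F (List.ofFn fun i => (γ (p.val.1 i) : _)) *
            iterSlashDiff k₂ G (List.ofFn fun i => (γ (p.val.2 i) : _)) := by
  classical
  intro γ
  set γ' : Fin (s + t - 2) → SL2 := fun i => (γ i : SL2) with hγ'
  rw [expansion k₁ k₂ (s + t - 2) γ' F G]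
  set Sub := {q : (Fin (s - 1) → Fin (s + t - 2)) × (Fin (t - 1) → Fin (s + t - 2)) //
      StrictMono q.1 ∧ StrictMono q.2 ∧ Disjoint (Set.range q.1) (Set.range q.2) ∧
        Set.range q.1 ∪ Set.range q.2 = Set.univ} with hSub
  letI : Fintype Sub := Fintype.ofFinite _
  rw [finsum_eq_sum_of_fintype]
  set T : (Fin (s + t - 2) → Fin 3) → (ℍ → ℂ) := fun v =>
    iterSlashDiff k₁ F (((List.finRange (s + t - 2)).filter (fun i => decide (v i ≠ 1))).map γ') *
      iterSlashDiff k₂ G (((List.finRange (s + t - 2)).filter (fun i => decide (v i ≠ 0))).map γ') with hT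
  set ι : Sub → (Fin (s + t - 2) → Fin 3) := fun p => fun i => if i ∈ Set.range p.val.1 then 0 else 1
    with hι
  have hmemrange2 : ∀ (p : Sub) (i : Fin (s + t - 2)), i ∈ Set.range p.val.2 ↔ i ∉ Set.range p.val.1 := by
    intro p i
    constructor
    · intro h2 h1
      exact (Set.disjoint_left.mp p.2.2.2.1) h1 h2
    · intro h1
      have : i ∈ Set.range p.val.1 ∪ Set.range p.val.2 := by rw [p.2.2.2.2]; trivial
      rcases this with h | h
      · exact absurd h h1
      · exact h
  -- term matching
  have hterm : ∀ p : Sub, T (ι p) =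
      iterSlashDiff k₁ F (List.ofFn fun i => (γ (p.val.1 i) : SL2)) *
        iterSlashDiff k₂ G (List.ofFn fun i => (γ (p.val.2 i) : SL2)) := by
    intro p
    have e1 : (List.finRange (s + t - 2)).filter (fun i => decide (ι p i ≠ 1)) = List.ofFn p.val.1 := by
      apply filter_finRange_eq_ofFn p.val.1 p.2.1
      intro i
      simp only [hι, decide_eq_true_eq]
      by_cases h : i ∈ Set.range p.val.1 <;> simp [h]
    have e2 : (List.finRange (s + t - 2)).filter (fun i => decide (ι p i ≠ 0)) = List.ofFn p.val.2 := by
      apply filter_finRange_eq_ofFn p.val.2 p.2.2.1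
      intro i
      simp only [hι, decide_eq_true_eq]
      rw [hmemrange2 p i]
      by_cases h : i ∈ Set.range p.val.1 <;> simp [h]
    simp only [hT, e1, e2, List.map_ofFn]
    rfl
  -- injectivity
  have hinj : Function.Injective ι := by
    intro p p' hpp
    have hr1 : Set.range p.val.1 = Set.range p'.val.1 := by
      ext i
      have := congrFun hpp i
      simp only [hι] at this
      by_cases h : i ∈ Set.range p.val.1 <;> by_cases h' : i ∈ Set.range p'.val.1 <;>
        simp [h, h'] at this ⊢
    have hq1 : p.val.1 = p'.val.1 := strictMono_range_eq p.2.1 p'.2.1 hr1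
    have hr2 : Set.range p.val.2 = Set.range p'.val.2 := by
      ext i
      rw [hmemrange2 p i, hmemrange2 p' i, hr1]
    have hq2 : p.val.2 = p'.val.2 := strictMono_range_eq p.2.2.1 p'.2.2.1 hr2
    exact Subtype.ext (Prod.ext hq1 hq2)
  -- vanishing off the range of ι
  have hvanish : ∀ v : Fin (s + t - 2) → Fin 3, v ∉ Set.range ι → T v = 0 := by
    intro v hv
    have hor : ∀ x ∈ List.finRange (s + t - 2),
        (fun i => decide (v i ≠ 1)) x ∨ (fun i => decide (v i ≠ 0)) x := by
      intro x _
      by_cases h : v x = 1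
      · right; simp [h]
      · left; simp [h]
    have hsum := length_le_filter_add_filter _ _ (List.finRange (s + t - 2)) hor
    rw [List.length_finRange] at hsum
    set aF := ((List.finRange (s + t - 2)).filter (fun i => decide (v i ≠ 1))).length with haF
    set aG := ((List.finRange (s + t - 2)).filter (fun i => decide (v i ≠ 0))).length with haG
    have hmemF : ∀ x ∈ ((List.finRange (s + t - 2)).filter (fun i => decide (v i ≠ 1))).map γ', x ∈ Γ := by
      intro x hx
      obtain ⟨i, _, rfl⟩ := List.mem_map.mp hx
      exact (γ i).2
    have hmemG : ∀ x ∈ ((List.finRange (s + t - 2)).filter (fun i => decide (v i ≠ 0))).map γ', x ∈ Γ := by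
      intro x hx
      obtain ⟨i, _, rfl⟩ := List.mem_map.mp hx
      exact (γ i).2
    by_cases hsF : s ≤ aF
    · have := iter_vanish Γ k₁ F s hF _ hmemF (by rw [List.length_map]; omega)
      simp only [hT]
      rw [this]
      exact zero_mul _
    by_cases hsG : t ≤ aG
    · have := iter_vanish Γ k₂ G t hG _ hmemG (by rw [List.length_map]; omega)
      simp only [hT]
      rw [this]
      exact mul_zero _
    -- otherwise v is in the range of ι : contradiction
    exfalso
    have haF' : aF = s - 1 := by omega
    have haG' : aG = t - 1 := by omega
    have heq : ((List.finRange (s + t - 2)).filter (fun i => decide (v i ≠ 1))).length +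
        ((List.finRange (s + t - 2)).filter (fun i => decide (v i ≠ 0))).length =
        (List.finRange (s + t - 2)).length := by
      rw [List.length_finRange]; omega
    have hno2 := no_overlap_of_eq _ _ (List.finRange (s + t - 2)) hor heq
    have hbin : ∀ i : Fin (s + t - 2), v i = 0 ∨ v i = 1 := by
      intro i
      have := hno2 i (List.mem_finRange i)
      simp only [decide_eq_true_eq] at this
      by_cases h0 : v i = 0
      · left; exact h0
      · right
        by_contra h1
        exact this ⟨by simp [h1], by simp [h0]⟩
    set A : Finset (Fin (s + t - 2)) := Finset.univ.filter (fun i => v i = 0) with hA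
    set B : Finset (Fin (s + t - 2)) := Finset.univ.filter (fun i => v i ≠ 0) with hB
    have hcardA : A.card = s - 1 := by
      rw [← haF', haF, filter_length_eq_card]
      congr 1
      apply Finset.filter_congr
      intro i _
      simp only [decide_eq_true_eq]
      rcases hbin i with h | h <;> simp [h] <;> decide
    have hcardB : B.card = t - 1 := by
      rw [← haG', haG, filter_length_eq_card]
      congr 1
      apply Finset.filter_congr
      intro i _
      simp
    set q1 := A.orderEmbOfFin hcardA with hq1
    set q2 := B.orderEmbOfFin hcardB with hq2
    have hrange1 : Set.range ⇑q1 = ↑A := Finset.range_orderEmbOfFin A hcardA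
    have hrange2 : Set.range ⇑q2 = ↑B := Finset.range_orderEmbOfFin B hcardB
    have hdisj : Disjoint (Set.range ⇑q1) (Set.range ⇑q2) := by
      rw [hrange1, hrange2]
      rw [Set.disjoint_left]
      intro i hiA hiB
      simp [hA] at hiA
      simp [hB] at hiB
      exact hiB hiA
    have huniv : Set.range ⇑q1 ∪ Set.range ⇑q2 = Set.univ := by
      rw [hrange1, hrange2]
      ext i
      simp only [Set.mem_union, Set.mem_univ, iff_true, Finset.coe_filter]
      by_cases h : v i = 0
      · left; simp [hA, h]
      · right; simp [hB, h]
    apply hv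
    refine ⟨⟨(⇑q1, ⇑q2), q1.strictMono, q2.strictMono, hdisj, huniv⟩, ?_⟩
    funext i
    simp only [hι]
    by_cases h : v i = 0
    · rw [if_pos (by rw [hrange1]; simp [hA, h]), h]
    · rw [if_neg (by rw [hrange1]; simp [hA, h])]
      rcases hbin i with h0 | h1
      · exact absurd h0 h
      · rw [h1]
  -- assemble
  calc ∑ v : Fin (s + t - 2) → Fin 3, T v
      = ∑ v ∈ Finset.univ.filter (fun v => v ∈ Set.range ι), T v := by
        refine (Finset.sum_filter_of_ne ?_).symm
        intro v _ hTv
        by_contra h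
        exact hTv (hvanish v h)
    _ = ∑ v ∈ Finset.image ι Finset.univ, T v := by
        congr 1
        ext v
        simp [Set.mem_range]
    _ = ∑ p : Sub, T (ι p) := Finset.sum_image (fun x _ y _ h => hinj h)
    _ = _ := Finset.sum_congr rfl (fun p _ => hterm p)
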